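/- Let H be a complex Hilbert space, let v_1, …, v_n ∈ H be linearly independent, let f ∈ H, and let (u_m)_{m≥1} be a sequence of nonzero vectors of H such that ⟨f, u_m⟩/‖u_m‖ → 0 and ⟨v_j, u_m⟩/‖u_m‖ → 0 for each j = 1, …, n, as m → ∞. Then the distance from f to the linear span of {v_1, …, v_n, u_m} converges, as m → ∞, to the distance from f to the linear span of {v_1, …, v_n}. -/

import Mathlib

open scoped ComplexInnerProductSpace

open Filter Metric Submodule

private lemma aux_norm_sub_smul {H : Type*} [NormedAddCommGroup H] [InnerProductSpace ℂ H]
    (x y : H) (c : ℂ) : ‖x‖ - ‖(⟪y, x⟫ : ℂ)‖ / ‖y‖ ≤ ‖x - c • y‖ := by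
  rcases eq_or_ne y 0 with rfl | hy
  · simp
  have hy0 : (0:ℝ) < ‖y‖ := norm_pos_iff.mpr hy
  have hsq : ‖x - c • y‖ ^ 2 = ‖x‖ ^ 2 - 2 * Complex.re ⟪x, c • y⟫ + ‖c • y‖ ^ 2 :=
    norm_sub_sq (𝕜 := ℂ) x (c • y)
  have hre : Complex.re ⟪x, c • y⟫ ≤ ‖c‖ * ‖(⟪y, x⟫ : ℂ)‖ := by
    calc Complex.re ⟪x, c • y⟫ ≤ ‖(⟪x, c • y⟫ : ℂ)‖ := Complex.re_le_norm _
    _ = ‖c‖ * ‖(⟪x, y⟫ : ℂ)‖ := by rw [inner_smul_right]; simp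
    _ = ‖c‖ * ‖(⟪y, x⟫ : ℂ)‖ := by rw [norm_inner_symm]
  have hcs : ‖(⟪y, x⟫ : ℂ)‖ ≤ ‖y‖ * ‖x‖ := norm_inner_le_norm y x
  have hns : ‖c • y‖ = ‖c‖ * ‖y‖ := norm_smul c y
  have hn0 : (0:ℝ) ≤ ‖x - c • y‖ := norm_nonneg _
  have hc0 : (0:ℝ) ≤ ‖c‖ := norm_nonneg _
  set b : ℝ := ‖(⟪y, x⟫ : ℂ)‖ / ‖y‖ with hb
  have hb0 : 0 ≤ b := div_nonneg (norm_nonneg _) (norm_nonneg _)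
  have h3 : b * ‖y‖ = ‖(⟪y, x⟫ : ℂ)‖ := div_mul_cancel₀ _ hy0.ne'
  have h2 : b ≤ ‖x‖ := by
    rw [hb, div_le_iff₀ hy0]; nlinarith [hcs]
  have hre2 : Complex.re ⟪x, c • y⟫ ≤ (‖c‖ * ‖y‖) * b := by
    calc Complex.re ⟪x, c • y⟫ ≤ ‖c‖ * ‖(⟪y, x⟫ : ℂ)‖ := hre
    _ = (‖c‖ * ‖y‖) * b := by rw [← h3]; ring
  have key : ‖x - c • y‖ ^ 2 ≥ (‖x‖ - b) ^ 2 := by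
    rw [hsq, hns]
    nlinarith [sq_nonneg (‖c‖ * ‖y‖ - b), hre2, hb0, h2,
      mul_nonneg hb0 (sub_nonneg.mpr h2)]
  nlinarith [key, hn0, h2, mul_nonneg hb0 (sub_nonneg.mpr h2)]

/-- **Abstract boundary vanishing lemma (Lemma 2.1 of AMUCD), Hilbert space form.**
Let `H` be a complex Hilbert space, `v 1, …, v n` linearly independent, `f ∈ H`, and
`(u m)` a sequence of nonzero vectors with `⟨f, u m⟩/‖u m‖ → 0` and `⟨v j, u m⟩/‖u m‖ → 0`
for each `j`. Then the distance from `f` to `span {v 1, …, v n, u m}` converges to the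
distance from `f` to `span {v 1, …, v n}`. (Note `⟨x, u⟩` in the paper's convention, linear
in the first slot, is `⟪u, x⟫` in Mathlib's convention; the absolute values agree anyway.) -/
theorem stmt4 {H : Type*} [NormedAddCommGroup H] [InnerProductSpace ℂ H] [CompleteSpace H]
    (n : ℕ) (v : Fin n → H) (hv : LinearIndependent ℂ v) (f : H)
    (u : ℕ → H) (hu : ∀ m, u m ≠ 0)
    (hf0 : Filter.Tendsto (fun m => ⟪u m, f⟫ / (‖u m‖ : ℂ)) Filter.atTop (nhds 0))
    (hv0 : ∀ j : Fin n,
      Filter.Tendsto (fun m => ⟪u m, v j⟫ / (‖u m‖ : ℂ)) Filter.atTop (nhds 0)) :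
    Filter.Tendsto
      (fun m => Metric.infDist f
        (Submodule.span ℂ (insert (u m) (Set.range v)) : Set H))
      Filter.atTop
      (nhds (Metric.infDist f (Submodule.span ℂ (Set.range v) : Set H))) := by
  classical
  set V : Submodule ℂ H := Submodule.span ℂ (Set.range v) with hV
  haveI : FiniteDimensional ℂ V := FiniteDimensional.span_of_finite ℂ (Set.finite_range v)
  set P := orthogonalProjection V with hP
  set f' : H := f - (P f : H) with hf'
  have hf'mem : f' ∈ Vᗮ := Submodule.sub_starProjection_mem_orthogonal f
  have hu0 : ∀ m, (0:ℝ) < ‖u m‖ := fun m => norm_pos_iff.mpr (hu m)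
  -- inner products with elements of V vanish in the limit
  have key : ∀ x ∈ V, Tendsto (fun m => (⟪u m, x⟫ : ℂ) / (‖u m‖ : ℂ)) atTop (nhds 0) := by
    intro x hx
    induction hx using Submodule.span_induction with
    | mem x hx => obtain ⟨j, rfl⟩ := hx; exact hv0 j
    | zero => simpa using (tendsto_const_nhds : Tendsto (fun _ : ℕ => (0:ℂ)) atTop (nhds 0))
    | add x y _ _ ihx ihy =>
        have := ihx.add ihy
        simpa [inner_add_right, add_div] using this
    | smul c x _ ihx =>
        have := ihx.const_mul c
        simpa [inner_smul_right, mul_div_assoc] using this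
  have keyN : ∀ x ∈ V, Tendsto (fun m => ‖(⟪u m, x⟫ : ℂ)‖ / ‖u m‖) atTop (nhds 0) := by
    intro x hx
    have h := (key x hx).norm
    simp only [norm_div, Complex.norm_real, norm_norm, norm_zero] at h
    exact h
  -- the projection of u m onto V is small compared to ‖u m‖
  have h1 : Tendsto (fun m => ‖(P (u m) : H)‖ / ‖u m‖) atTop (nhds 0) := by
    set b := stdOrthonormalBasis ℂ V with hbdef
    have hb : ∀ m, ‖(P (u m) : H)‖ ≤ ∑ i, ‖(⟪u m, ((b i : V) : H)⟫ : ℂ)‖ := by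
      intro m
      have heq : (P (u m) : H) = ∑ i, (⟪((b i : V) : H), u m⟫ : ℂ) • ((b i : V) : H) := by
        rw [hP, show orthogonalProjection V = V.orthogonalProjectionOnto from rfl,
          b.orthogonalProjectionOnto_apply_eq_sum (u m)]
        push_cast
        rfl
      rw [heq]
      calc ‖∑ i, (⟪((b i : V) : H), u m⟫ : ℂ) • ((b i : V) : H)‖
          ≤ ∑ i, ‖(⟪((b i : V) : H), u m⟫ : ℂ) • ((b i : V) : H)‖ := norm_sum_le _ _
        _ ≤ ∑ i, ‖(⟪u m, ((b i : V) : H)⟫ : ℂ)‖ := by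
            refine Finset.sum_le_sum fun i _ => ?_
            rw [norm_smul, norm_inner_symm]
            have h1 : ‖((b i : V) : H)‖ = 1 := by
              rw [Submodule.norm_coe]
              exact b.orthonormal.1 i
            rw [h1, mul_one]
    have hsum : Tendsto (fun m => (∑ i, ‖(⟪u m, ((b i : V) : H)⟫ : ℂ)‖) / ‖u m‖)
        atTop (nhds 0) := by
      simp only [Finset.sum_div]
      have := tendsto_finset_sum Finset.univ
        (fun i ( _ : i ∈ Finset.univ) => keyN ((b i : V) : H) (SetLike.coe_mem _))
      simpa using this
    refine tendsto_of_tendsto_of_tendsto_of_le_of_le tendsto_const_nhds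
      hsum (fun m => ?_) (fun m => ?_)
    · exact div_nonneg (norm_nonneg _) (norm_nonneg _)
    · gcongr
      exact hb m
  -- ε m
  set εs : ℕ → ℝ := fun m => 2 * ‖(⟪u m, f'⟫ : ℂ)‖ / ‖u m‖ with hεs
  have h2 : Tendsto εs atTop (nhds 0) := by
    have hPf : ((P f : H)) ∈ V := SetLike.coe_mem _
    have t1 := hf0.sub (key _ hPf)
    have t2 : Tendsto (fun m => (⟪u m, f'⟫ : ℂ) / (‖u m‖ : ℂ)) atTop (nhds 0) := by
      simpa [hf', inner_sub_right, sub_div] using t1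
    have t3 := (t2.norm).const_mul 2
    simp only [norm_div, Complex.norm_real, abs_norm, norm_zero, mul_zero] at t3
    simpa [hεs, mul_div_assoc] using t3
  -- minimality
  have hmin : ∀ (x y : H), y ∈ V → ‖x - (P x : H)‖ ≤ ‖x - y‖ := by
    intro x y hy
    rw [show (P x : H) = V.starProjection x from rfl, Submodule.starProjection_minimal]
    exact ciInf_le ⟨0, Set.forall_mem_range.mpr fun _ => norm_nonneg _⟩ (⟨y, hy⟩ : V)
  -- distance to V
  have hd : Metric.infDist f (V : Set H) = ‖f'‖ := by
    refine le_antisymm ?_ ?_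
    · have := infDist_le_dist_of_mem (x := f) (SetLike.coe_mem (P f))
      rwa [dist_eq_norm] at this
    · refine le_of_not_gt fun hlt => ?_
      obtain ⟨y, hy, hdy⟩ := (infDist_lt_iff ⟨0, Submodule.zero_mem V⟩).mp hlt
      rw [dist_eq_norm] at hdy
      exact absurd hdy (not_lt.mpr (hmin f y hy))
  -- eventually ‖w m‖ ≥ ‖u m‖/2
  have hw : ∀ᶠ m in atTop, ‖u m‖ / 2 ≤ ‖u m - (P (u m) : H)‖ := by
    filter_upwards [h1.eventually_lt_const (by norm_num : (0:ℝ) < 1/2)] with m hm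
    rw [div_lt_iff₀ (hu0 m)] at hm
    have := norm_sub_norm_le (u m) ((P (u m) : H))
    linarith
  -- squeeze
  rw [show Metric.infDist f (Submodule.span ℂ (Set.range v) : Set H) = ‖f'‖ from hd]
  have hlim : Tendsto (fun m => ‖f'‖ - εs m) atTop (nhds ‖f'‖) := by
    simpa using tendsto_const_nhds.sub h2
  refine tendsto_of_tendsto_of_tendsto_of_le_of_le' hlim tendsto_const_nhds ?_ ?_
  · -- lower bound, eventually
    filter_upwards [hw] with m hm
    refine le_of_not_gt fun hlt => ?_
    have hne : (Submodule.span ℂ (insert (u m) (Set.range v)) : Set H).Nonempty :=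
      ⟨0, Submodule.zero_mem _⟩
    obtain ⟨g, hg, hdg⟩ := (infDist_lt_iff hne).mp hlt
    obtain ⟨c, a, ha, rfl⟩ := Submodule.mem_span_insert.mp hg
    rw [dist_eq_norm] at hdg
    set w : H := u m - (P (u m) : H) with hwdef
    have hw0 : (0:ℝ) < ‖w‖ := lt_of_lt_of_le (by linarith [hu0 m]) hm
    -- ⟪w, f'⟫ = ⟪u m, f'⟫
    have hinner : (⟪w, f'⟫ : ℂ) = ⟪u m, f'⟫ := by
      have hz : (⟪((P (u m) : H)), f'⟫ : ℂ) = 0 :=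
        (Submodule.mem_orthogonal V f').mp hf'mem _ (SetLike.coe_mem _)
      rw [hwdef, inner_sub_left, hz, sub_zero]
    set x : H := f - (c • u m + a) with hx
    have hPa : (P a : H) = a := Submodule.starProjection_eq_self_iff.mpr ha
    have hxP : x - (P x : H) = f' - c • w := by
      have : (P x : H) = (P f : H) - (c • (P (u m) : H) + a) := by
        rw [hx, map_sub, map_add, map_smul]
        push_cast [hPa]
        ring_nf
      rw [this, hx, hf', hwdef]
      module
    have step1 : ‖x - (P x : H)‖ ≤ ‖x‖ := by
      simpa using hmin x 0 (Submodule.zero_mem V)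
    have step3 : ‖f'‖ - ‖(⟪w, f'⟫ : ℂ)‖ / ‖w‖ ≤ ‖f' - c • w‖ := aux_norm_sub_smul f' w c
    have step5 : ‖(⟪u m, f'⟫ : ℂ)‖ / ‖w‖ ≤ εs m := by
      have := div_le_div_of_nonneg_left (norm_nonneg (⟪u m, f'⟫ : ℂ))
        (by linarith [hu0 m] : (0:ℝ) < ‖u m‖ / 2) hm
      calc ‖(⟪u m, f'⟫ : ℂ)‖ / ‖w‖ ≤ ‖(⟪u m, f'⟫ : ℂ)‖ / (‖u m‖ / 2) := this
        _ = εs m := by rw [hεs]; field_simp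
    have : ‖f'‖ - εs m ≤ ‖x‖ := by
      have := step3.trans (le_trans (le_of_eq (by rw [hxP])) step1)
      rw [hinner] at this
      linarith [step5, this]
    exact absurd hdg (not_lt.mpr this)
  · -- upper bound
    refine Eventually.of_forall fun m => ?_
    rw [← hd]
    refine infDist_le_infDist_of_subset ?_ ⟨0, Submodule.zero_mem V⟩
    exact Submodule.span_mono (Set.subset_insert _ _)
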